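/- arXiv:2305.15857 — 3 statements merged into one kernel-verified Lean document; each statement's English description precedes it below -/
import Mathlib

section
/- Let Ω ⊆ ℝ³ be open and let f : Ω → ℝ be twice continuously differentiable with f > 0 on Ω, and set α := ∇f/f (a pure-quaternion-valued function on Ω). Then α satisfies the Vekua equation Dα = α·star(α) on Ω if and only if Δf = 0 on Ω. -/
open MeasureTheory

noncomputable section

/-- The quaternion unit `i`. -/
def qi : Quaternion ℝ := ⟨0, 1, 0, 0⟩
/-- The quaternion unit `j`. -/
def qj : Quaternion ℝ := ⟨0, 0, 1, 0⟩
/-- The quaternion unit `k`. -/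
def qk : Quaternion ℝ := ⟨0, 0, 0, 1⟩

/-- Partial derivative of a quaternion-valued function on `ℝ³`. -/
def pd (i : Fin 3) (w : (Fin 3 → ℝ) → Quaternion ℝ) (x : Fin 3 → ℝ) : Quaternion ℝ :=
  fderiv ℝ w x (Pi.single i 1)

/-- Partial derivative of a real-valued function on `ℝ³`. -/
def pdR (i : Fin 3) (u : (Fin 3 → ℝ) → ℝ) (x : Fin 3 → ℝ) : ℝ :=
  fderiv ℝ u x (Pi.single i 1)

/-- Moisil–Teodorescu operator `Dw = i ∂₁ w + j ∂₂ w + k ∂₃ w`. -/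
def Dq (w : (Fin 3 → ℝ) → Quaternion ℝ) (x : Fin 3 → ℝ) : Quaternion ℝ :=
  qi * pd 0 w x + qj * pd 1 w x + qk * pd 2 w x

/-- Gradient of a real-valued function, viewed as a pure quaternion. -/
def gradq (u : (Fin 3 → ℝ) → ℝ) (x : Fin 3 → ℝ) : Quaternion ℝ :=
  ⟨0, pdR 0 u x, pdR 1 u x, pdR 2 u x⟩

/-- Laplacian of a real-valued function on `ℝ³`. -/
def lapl (u : (Fin 3 → ℝ) → ℝ) (x : Fin 3 → ℝ) : ℝ :=
  pdR 0 (pdR 0 u) x + pdR 1 (pdR 1 u) x + pdR 2 (pdR 2 u) x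

/-- Vector (non-scalar) part of a quaternion. -/
def Vecq (q : Quaternion ℝ) : Quaternion ℝ := q - (q.re : Quaternion ℝ)

/-- Divergence of the vector part of a quaternion-valued function. -/
def divVec (α : (Fin 3 → ℝ) → Quaternion ℝ) (x : Fin 3 → ℝ) : ℝ :=
  pdR 0 (fun y => (α y).imI) x + pdR 1 (fun y => (α y).imJ) x + pdR 2 (fun y => (α y).imK) x


theorem qi_re : qi.re = 0 := rfl
theorem qi_imI : qi.imI = 1 := rfl
theorem qi_imJ : qi.imJ = 0 := rfl
theorem qi_imK : qi.imK = 0 := rfl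
theorem qj_re : qj.re = 0 := rfl
theorem qj_imI : qj.imI = 0 := rfl
theorem qj_imJ : qj.imJ = 1 := rfl
theorem qj_imK : qj.imK = 0 := rfl
theorem qk_re : qk.re = 0 := rfl
theorem qk_imI : qk.imI = 0 := rfl
theorem qk_imJ : qk.imJ = 0 := rfl
theorem qk_imK : qk.imK = 1 := rfl
theorem gradq_re (u : (Fin 3 → ℝ) → ℝ) (x : Fin 3 → ℝ) : (gradq u x).re = 0 := rfl
theorem gradq_imI (u : (Fin 3 → ℝ) → ℝ) (x : Fin 3 → ℝ) : (gradq u x).imI = pdR 0 u x := rfl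
theorem gradq_imJ (u : (Fin 3 → ℝ) → ℝ) (x : Fin 3 → ℝ) : (gradq u x).imJ = pdR 1 u x := rfl
theorem gradq_imK (u : (Fin 3 → ℝ) → ℝ) (x : Fin 3 → ℝ) : (gradq u x).imK = pdR 2 u x := rfl

/-- `α = ∇f/f` satisfies the Vekua equation `Dα = α·star α` on `Ω`
iff `f` is harmonic on `Ω`. -/
theorem gradlog_vekua_iff_harmonic (Ω : Set (Fin 3 → ℝ)) (hΩ : IsOpen Ω)
    (f : (Fin 3 → ℝ) → ℝ) (hf : ContDiffOn ℝ 2 f Ω)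
    (hfpos : ∀ x ∈ Ω, 0 < f x) :
    (∀ x ∈ Ω, Dq (fun y => (f y)⁻¹ • gradq f y) x =
        ((f x)⁻¹ • gradq f x) * star ((f x)⁻¹ • gradq f x)) ↔
    (∀ x ∈ Ω, lapl f x = 0) := by
  have key : ∀ x ∈ Ω, (Dq (fun y => (f y)⁻¹ • gradq f y) x =
      ((f x)⁻¹ • gradq f x) * star ((f x)⁻¹ • gradq f x)) ↔ lapl f x = 0 := by
    intro x hx
    have hmem : Ω ∈ nhds x := hΩ.mem_nhds hx
    have hC : ContDiffAt ℝ 2 f x := hf.contDiffAt hmem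
    have hne : f x ≠ 0 := ne_of_gt (hfpos x hx)
    have hdf : DifferentiableAt ℝ f x := hC.differentiableAt (by norm_num)
    have hd' : DifferentiableAt ℝ (fderiv ℝ f) x :=
      (hC.fderiv_right (m := 1) (by norm_num)).differentiableAt (by norm_num)
    set g : Fin 3 → (Fin 3 → ℝ) → ℝ := fun m y => fderiv ℝ f y (Pi.single m 1) with hg
    have hdg : ∀ m, DifferentiableAt ℝ (g m) x :=
      fun m => hd'.clm_apply (differentiableAt_const _)
    set S : Fin 3 → Fin 3 → ℝ :=
      fun i m => fderiv ℝ (fderiv ℝ f) x (Pi.single i 1) (Pi.single m 1) with hS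
    have pdRg : ∀ i m, fderiv ℝ (g m) x (Pi.single i 1) = S i m := by
      intro i m
      rw [hg]
      rw [fderiv_clm_apply hd' (differentiableAt_const _)]
      simp [hS]
    have hsymm : ∀ i m, S i m = S m i := by
      intro i m
      exact hC.isSymmSndFDerivAt (by simp) _ _
    have hinv : HasFDerivAt (fun y => (f y)⁻¹) ((-(f x ^ 2)⁻¹) • fderiv ℝ f x) x :=
      (hasDerivAt_inv hne).comp_hasFDerivAt x hdf.hasFDerivAt
    set L : Fin 3 → ((Fin 3 → ℝ) →L[ℝ] ℝ) := fun m =>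
      (f x)⁻¹ • fderiv ℝ (g m) x + (g m x) • ((-(f x ^ 2)⁻¹) • fderiv ℝ f x) with hL
    have hh : ∀ m, HasFDerivAt (fun y => (f y)⁻¹ * g m y) (L m) x :=
      fun m => hinv.mul (hdg m).hasFDerivAt
    set A : Fin 3 → Fin 3 → ℝ := fun i m =>
      (f x)⁻¹ * S i m - (f x ^ 2)⁻¹ * (g m x * g i x) with hA
    have hLA : ∀ i m, L m (Pi.single i 1) = A i m := by
      intro i m
      simp [hL, hA, pdRg i m]
      ring
    have wdef : (fun y => (f y)⁻¹ • gradq f y) = fun y =>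
        ((f y)⁻¹ * g 0 y) • qi + ((f y)⁻¹ * g 1 y) • qj + ((f y)⁻¹ * g 2 y) • qk := by
      funext y
      ext <;> simp [gradq_re, gradq_imI, gradq_imJ, gradq_imK, qi_re, qi_imI, qi_imJ, qi_imK,
        qj_re, qj_imI, qj_imJ, qj_imK, qk_re, qk_imI, qk_imJ, qk_imK, Quaternion.re_smul, pdR, hg]
    have hw : HasFDerivAt (fun y => (f y)⁻¹ • gradq f y)
        ((L 0).smulRight qi + (L 1).smulRight qj + (L 2).smulRight qk) x := by
      rw [wdef]
      exact (((hh 0).smul_const qi).add ((hh 1).smul_const qj)).add ((hh 2).smul_const qk)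
    have pdval : ∀ i, pd i (fun y => (f y)⁻¹ • gradq f y) x
        = (A i 0) • qi + (A i 1) • qj + (A i 2) • qk := by
      intro i
      simp [pd, hw.fderiv, hLA]
    have hgradq : gradq f x = ⟨0, g 0 x, g 1 x, g 2 x⟩ := rfl
    have hlapl : lapl f x = S 0 0 + S 1 1 + S 2 2 := by
      show fderiv ℝ (g 0) x _ + fderiv ℝ (g 1) x _ + fderiv ℝ (g 2) x _ = _
      rw [pdRg, pdRg, pdRg]
    have hg0 : pdR 0 f x = g 0 x := rfl
    have hg1 : pdR 1 f x = g 1 x := rfl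
    have hg2 : pdR 2 f x = g 2 x := rfl
    rw [Dq, pdval 0, pdval 1, pdval 2, hlapl]
    rw [Quaternion.ext_iff]
    simp [qi_re, qi_imI, qi_imJ, qi_imK, qj_re, qj_imI, qj_imJ, qj_imK, qk_re, qk_imI, qk_imJ, qk_imK,
      Quaternion.re_smul, Quaternion.re_mul, Quaternion.imI_mul, Quaternion.imJ_mul,
      Quaternion.imK_mul, hA, gradq_re, gradq_imI, gradq_imJ, gradq_imK, hg0, hg1, hg2]
    have hsq : (f x ^ 2)⁻¹ = (f x)⁻¹ * (f x)⁻¹ := by rw [sq, mul_inv]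
    constructor
    · rintro ⟨h1, -, -, -⟩
      rw [hsq] at h1
      have hS0 : (f x)⁻¹ * (S 0 0 + S 1 1 + S 2 2) = 0 := by linarith
      have hinv0 : (f x)⁻¹ ≠ 0 := inv_ne_zero hne
      exact (mul_eq_zero.mp hS0).resolve_left hinv0
    · intro h0
      refine ⟨?_, ?_, ?_, ?_⟩
      · rw [hsq]; linear_combination (-(f x)⁻¹) * h0
      · rw [hsymm 1 2]; ring
      · rw [hsymm 0 2]; ring
      · rw [hsymm 0 1]; ring
  constructor
  · intro H x hx; exact (key x hx).mp (H x hx)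
  · intro H x hx; exact (key x hx).mpr (H x hx)


end
end

section
/- Let Ω ⊆ ℝ³ be open, let α, β : Ω → ℍ be differentiable, and let h₀ : Ω → ℝ be twice differentiable. Define v := ∇h₀ − h₀·α − h₀·β (the result of applying the operator D − αC − β to the scalar function h₀). Then for every x ∈ Ω: Sc( Dv(x) − star(v(x))·α(x) − star(β(x))·v(x) ) = −Δh₀(x) + ( |α(x)|² + |β(x)|² + div(Vec α)(x) + div(Vec β)(x) + 2·Sc(star(α(x))·β(x)) )·h₀(x). In other words, the Schrödinger operator −Δ + |α|² + |β|² + div(Vec α) + div(Vec β) + 2·Sc(star(α)·β) on scalar functions is the scalar part of the composition (D − M^α C − conj(β))(D − αC − β). -/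
open MeasureTheory

noncomputable section

/-- `imI` as a continuous linear map. -/
def imICLM : Quaternion ℝ →L[ℝ] ℝ :=
  LinearMap.toContinuousLinearMap
    { toFun := fun q => q.imI, map_add' := fun _ _ => rfl, map_smul' := fun _ _ => rfl }

/-- `imJ` as a continuous linear map. -/
def imJCLM : Quaternion ℝ →L[ℝ] ℝ :=
  LinearMap.toContinuousLinearMap
    { toFun := fun q => q.imJ, map_add' := fun _ _ => rfl, map_smul' := fun _ _ => rfl }

/-- `imK` as a continuous linear map. -/
def imKCLM : Quaternion ℝ →L[ℝ] ℝ :=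
  LinearMap.toContinuousLinearMap
    { toFun := fun q => q.imK, map_add' := fun _ _ => rfl, map_smul' := fun _ _ => rfl }

lemma pd_imI (w : (Fin 3 → ℝ) → Quaternion ℝ) (x : Fin 3 → ℝ)
    (hw : DifferentiableAt ℝ w x) (i : Fin 3) :
    pdR i (fun y => (w y).imI) x = (pd i w x).imI := by
  unfold pdR pd
  rw [show (fun y => (w y).imI) = (imICLM : Quaternion ℝ →L[ℝ] ℝ) ∘ w from rfl,
    (imICLM.hasFDerivAt.comp x hw.hasFDerivAt).fderiv]
  rfl

lemma pd_imJ (w : (Fin 3 → ℝ) → Quaternion ℝ) (x : Fin 3 → ℝ)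
    (hw : DifferentiableAt ℝ w x) (i : Fin 3) :
    pdR i (fun y => (w y).imJ) x = (pd i w x).imJ := by
  unfold pdR pd
  rw [show (fun y => (w y).imJ) = (imJCLM : Quaternion ℝ →L[ℝ] ℝ) ∘ w from rfl,
    (imJCLM.hasFDerivAt.comp x hw.hasFDerivAt).fderiv]
  rfl

lemma pd_imK (w : (Fin 3 → ℝ) → Quaternion ℝ) (x : Fin 3 → ℝ)
    (hw : DifferentiableAt ℝ w x) (i : Fin 3) :
    pdR i (fun y => (w y).imK) x = (pd i w x).imK := by
  unfold pdR pd
  rw [show (fun y => (w y).imK) = (imKCLM : Quaternion ℝ →L[ℝ] ℝ) ∘ w from rfl,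
    (imKCLM.hasFDerivAt.comp x hw.hasFDerivAt).fderiv]
  rfl

lemma gradq_eq (u : (Fin 3 → ℝ) → ℝ) :
    gradq u = fun y => pdR 0 u y • qi + pdR 1 u y • qj + pdR 2 u y • qk := by
  funext y
  unfold gradq
  apply QuaternionAlgebra.ext <;> simp [Quaternion.re_smul] <;> simp [qi, qj, qk]

lemma norm_sq_eq (a : Quaternion ℝ) :
    ‖a‖ ^ 2 = a.re ^ 2 + a.imI ^ 2 + a.imJ ^ 2 + a.imK ^ 2 := by
  rw [sq, ← Quaternion.normSq_eq_norm_mul_self, Quaternion.normSq_def']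

lemma qi_c : qi.re = 0 ∧ qi.imI = 1 ∧ qi.imJ = 0 ∧ qi.imK = 0 ∧ qj.re = 0 ∧ qj.imI = 0 ∧ qj.imJ = 1 ∧
    qj.imK = 0 ∧ qk.re = 0 ∧ qk.imI = 0 ∧ qk.imJ = 0 ∧ qk.imK = 1 := by
  simp only [qi, qj, qk, and_self]

lemma gradq_c (u : (Fin 3 → ℝ) → ℝ) (y : Fin 3 → ℝ) : (gradq u y).re = 0 ∧
    (gradq u y).imI = pdR 0 u y ∧ (gradq u y).imJ = pdR 1 u y ∧ (gradq u y).imK = pdR 2 u y :=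
  ⟨rfl, rfl, rfl, rfl⟩

/-- the Schrödinger operator
`−Δ + |α|² + |β|² + div(Vec α) + div(Vec β) + 2 Sc(star(α)β)` on scalar functions is the
scalar part of the composition `(D − MᵅC − conj β)(D − αC − β)`. -/
theorem factorization_second (Ω : Set (Fin 3 → ℝ)) (hΩ : IsOpen Ω)
    (α β : (Fin 3 → ℝ) → Quaternion ℝ)
    (hα : ∀ x ∈ Ω, DifferentiableAt ℝ α x) (hβ : ∀ x ∈ Ω, DifferentiableAt ℝ β x)
    (h₀ : (Fin 3 → ℝ) → ℝ)
    (hh₀ : ∀ x ∈ Ω, DifferentiableAt ℝ h₀ x)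
    (hh₀' : ∀ x ∈ Ω, DifferentiableAt ℝ (fderiv ℝ h₀) x) :
    ∀ x ∈ Ω,
      (Dq (fun y => gradq h₀ y - h₀ y • α y - h₀ y • β y) x
          - star (gradq h₀ x - h₀ x • α x - h₀ x • β x) * α x
          - star (β x) * (gradq h₀ x - h₀ x • α x - h₀ x • β x)).re =
        -lapl h₀ x +
          (‖α x‖ ^ 2 + ‖β x‖ ^ 2 + divVec α x + divVec β x
            + 2 * (star (α x) * β x).re) * h₀ x := by
  intro x hx
  have hdh : ∀ j : Fin 3, DifferentiableAt ℝ (pdR j h₀) x := by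
    intro j
    have h1 : (fun y => pdR j h₀ y)
        = fun y => (ContinuousLinearMap.apply ℝ ℝ (Pi.single j 1)) (fderiv ℝ h₀ y) := rfl
    rw [show pdR j h₀ = fun y => pdR j h₀ y from rfl, h1]
    exact (ContinuousLinearMap.apply ℝ ℝ (Pi.single j 1)).differentiableAt.comp x (hh₀' x hx)
  have Hgrad : HasFDerivAt (gradq h₀)
      ((fderiv ℝ (pdR 0 h₀) x).smulRight qi + (fderiv ℝ (pdR 1 h₀) x).smulRight qj
        + (fderiv ℝ (pdR 2 h₀) x).smulRight qk) x := by
    rw [gradq_eq]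
    exact (((hdh 0).hasFDerivAt.smul_const qi).add ((hdh 1).hasFDerivAt.smul_const qj)).add
      ((hdh 2).hasFDerivAt.smul_const qk)
  have Hα : HasFDerivAt (fun y => h₀ y • α y)
      (h₀ x • fderiv ℝ α x + (fderiv ℝ h₀ x).smulRight (α x)) x :=
    (hh₀ x hx).hasFDerivAt.smul (hα x hx).hasFDerivAt
  have Hβ : HasFDerivAt (fun y => h₀ y • β y)
      (h₀ x • fderiv ℝ β x + (fderiv ℝ h₀ x).smulRight (β x)) x :=
    (hh₀ x hx).hasFDerivAt.smul (hβ x hx).hasFDerivAt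
  have Hv := (Hgrad.sub Hα).sub Hβ
  have key : ∀ i : Fin 3,
      pd i (fun y => gradq h₀ y - h₀ y • α y - h₀ y • β y) x =
        (pdR i (pdR 0 h₀) x • qi + pdR i (pdR 1 h₀) x • qj + pdR i (pdR 2 h₀) x • qk)
          - (h₀ x • pd i α x + pdR i h₀ x • α x)
          - (h₀ x • pd i β x + pdR i h₀ x • β x) := by
    intro i
    unfold pd pdR
    rw [show (fun y => gradq h₀ y - h₀ y • α y - h₀ y • β y)
        = ((gradq h₀ - fun y => h₀ y • α y) - fun y => h₀ y • β y) from rfl, Hv.fderiv]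
    simp [ContinuousLinearMap.smulRight_apply]
    rfl
  rw [show Dq (fun y => gradq h₀ y - h₀ y • α y - h₀ y • β y) x
      = qi * pd 0 (fun y => gradq h₀ y - h₀ y • α y - h₀ y • β y) x
        + qj * pd 1 (fun y => gradq h₀ y - h₀ y • α y - h₀ y • β y) x
        + qk * pd 2 (fun y => gradq h₀ y - h₀ y • α y - h₀ y • β y) x from rfl,
    key 0, key 1, key 2]
  rw [show divVec α x = pdR 0 (fun y => (α y).imI) x + pdR 1 (fun y => (α y).imJ) x
      + pdR 2 (fun y => (α y).imK) x from rfl,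
    pd_imI α x (hα x hx), pd_imJ α x (hα x hx), pd_imK α x (hα x hx),
    show divVec β x = pdR 0 (fun y => (β y).imI) x + pdR 1 (fun y => (β y).imJ) x
      + pdR 2 (fun y => (β y).imK) x from rfl,
    pd_imI β x (hβ x hx), pd_imJ β x (hβ x hx), pd_imK β x (hβ x hx),
    norm_sq_eq, norm_sq_eq,
    show lapl h₀ x = pdR 0 (pdR 0 h₀) x + pdR 1 (pdR 1 h₀) x + pdR 2 (pdR 2 h₀) x from rfl]
  simp only [qi_c, gradq_c, Quaternion.re_mul, Quaternion.re_add, Quaternion.re_sub,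
    Quaternion.re_smul, Quaternion.imI_add, Quaternion.imI_sub, Quaternion.imI_smul,
    Quaternion.imJ_add, Quaternion.imJ_sub, Quaternion.imJ_smul,
    Quaternion.imK_add, Quaternion.imK_sub, Quaternion.imK_smul,
    Quaternion.re_star, Quaternion.imI_star, Quaternion.imJ_star, Quaternion.imK_star,
    smul_eq_mul]
  ring
end
end

section
/- Let Ω ⊆ ℝ³ be open, let f : Ω → ℝ be twice continuously differentiable with f > 0 on Ω, set α := ∇f/f, and let h₀ : Ω → ℝ be twice differentiable. Define v := ∇h₀ − h₀·α. Then for every x ∈ Ω: Sc( Dv(x) − α(x)·star(v(x)) ) = −Δh₀(x) + ( Δf(x)/f(x) )·h₀(x). -/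
open MeasureTheory

noncomputable section

lemma pdR_sub {u g : (Fin 3 → ℝ) → ℝ} {x} (hu : DifferentiableAt ℝ u x)
    (hg : DifferentiableAt ℝ g x) (i : Fin 3) :
    pdR i (fun y => u y - g y) x = pdR i u x - pdR i g x := by
  simp [pdR, fderiv_fun_sub hu hg]

lemma pdR_mul {u g : (Fin 3 → ℝ) → ℝ} {x} (hu : DifferentiableAt ℝ u x)
    (hg : DifferentiableAt ℝ g x) (i : Fin 3) :
    pdR i (fun y => u y * g y) x = u x * pdR i g x + g x * pdR i u x := by
  simp [pdR, fderiv_fun_mul hu hg]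

lemma pdR_inv {u : (Fin 3 → ℝ) → ℝ} {x} (hu : DifferentiableAt ℝ u x)
    (hx : u x ≠ 0) (i : Fin 3) :
    pdR i (fun y => (u y)⁻¹) x = -(pdR i u x) / (u x)^2 := by
  have h : (fun y => (u y)⁻¹) = (fun t : ℝ => t⁻¹) ∘ u := rfl
  rw [pdR, h, fderiv_comp x (differentiableAt_inv hx) hu, fderiv_inv]
  simp [pdR]
  ring

lemma diff_pdR {u : (Fin 3 → ℝ) → ℝ} {x} (hu : DifferentiableAt ℝ (fderiv ℝ u) x)
    (i : Fin 3) : DifferentiableAt ℝ (pdR i u) x := by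
  have : pdR i u = fun y =>
      (ContinuousLinearMap.apply ℝ ℝ (Pi.single i 1 : Fin 3 → ℝ)) (fderiv ℝ u y) := rfl
  rw [this]
  exact ((ContinuousLinearMap.apply ℝ ℝ _).differentiableAt).comp x hu

lemma pd_triple {A0 A1 A2 : (Fin 3 → ℝ) → ℝ} {x} (h0 : DifferentiableAt ℝ A0 x)
    (h1 : DifferentiableAt ℝ A1 x) (h2 : DifferentiableAt ℝ A2 x) (i : Fin 3) :
    pd i (fun y => A0 y • qi + A1 y • qj + A2 y • qk) x
      = pdR i A0 x • qi + pdR i A1 x • qj + pdR i A2 x • qk := by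
  unfold pd pdR
  rw [fderiv_fun_add (f := fun y => A0 y • qi + A1 y • qj) ((h0.smul_const qi).add (h1.smul_const qj)) (h2.smul_const qk),
      fderiv_fun_add (h0.smul_const qi) (h1.smul_const qj),
      fderiv_smul_const h0, fderiv_smul_const h1, fderiv_smul_const h2]
  simp

/-- for `α = ∇f/f` (and `β = 0`), the factorization reduces to the
Schrödinger operator `−Δ + Δf/f`. -/
theorem factorization_schrodinger (Ω : Set (Fin 3 → ℝ)) (hΩ : IsOpen Ω)
    (f : (Fin 3 → ℝ) → ℝ) (hf : ContDiffOn ℝ 2 f Ω) (hfpos : ∀ x ∈ Ω, 0 < f x)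
    (h₀ : (Fin 3 → ℝ) → ℝ)
    (hh₀ : ∀ x ∈ Ω, DifferentiableAt ℝ h₀ x)
    (hh₀' : ∀ x ∈ Ω, DifferentiableAt ℝ (fderiv ℝ h₀) x) :
    ∀ x ∈ Ω,
      (Dq (fun y => gradq h₀ y - h₀ y • ((f y)⁻¹ • gradq f y)) x
          - ((f x)⁻¹ • gradq f x) *
              star (gradq h₀ x - h₀ x • ((f x)⁻¹ • gradq f x))).re =
        -lapl h₀ x + (lapl f x / f x) * h₀ x := by
  intro x hx
  have hfx : f x ≠ 0 := ne_of_gt (hfpos x hx)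
  have hmem := hΩ.mem_nhds hx
  have hfd : DifferentiableAt ℝ f x :=
    ((hf.differentiableOn (by norm_num)).differentiableAt hmem)
  have hfderiv : DifferentiableAt ℝ (fderiv ℝ f) x :=
    (((hf.fderiv_of_isOpen (m := 1) hΩ (by norm_num)).differentiableOn (by norm_num)).differentiableAt hmem)
  have hh0 := hh₀ x hx
  have hpf : ∀ i, DifferentiableAt ℝ (pdR i f) x := fun i => diff_pdR hfderiv i
  have hph : ∀ i, DifferentiableAt ℝ (pdR i h₀) x := fun i => diff_pdR (hh₀' x hx) i
  set A : Fin 3 → (Fin 3 → ℝ) → ℝ := fun i y => pdR i h₀ y - h₀ y * ((f y)⁻¹ * pdR i f y)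
    with hA
  have hAd : ∀ i, DifferentiableAt ℝ (A i) x := fun i =>
    (hph i).sub (hh0.mul ((hfd.inv hfx).mul (hpf i)))
  have hveq : (fun y => gradq h₀ y - h₀ y • ((f y)⁻¹ • gradq f y))
      = fun y => A 0 y • qi + A 1 y • qj + A 2 y • qk := by
    funext y
    ext <;> simp only [Quaternion.re_add, Quaternion.imI_add, Quaternion.imJ_add, Quaternion.imK_add, Quaternion.re_sub, Quaternion.imI_sub, Quaternion.imJ_sub, Quaternion.imK_sub, Quaternion.re_smul, Quaternion.imI_smul, Quaternion.imJ_smul, Quaternion.imK_smul, Quaternion.re_star, Quaternion.imI_star, Quaternion.imJ_star, Quaternion.imK_star, Quaternion.re_neg, Quaternion.imI_neg, Quaternion.imJ_neg, Quaternion.imK_neg] <;> simp [gradq, qi, qj, qk, hA, Quaternion.re_sub]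
  rw [hveq]
  have hAval : ∀ i, pdR i (A i) x = pdR i (pdR i h₀) x
      - (h₀ x * ((f x)⁻¹ * pdR i (pdR i f) x + pdR i f x * (-(pdR i f x) / (f x)^2))
        + ((f x)⁻¹ * pdR i f x) * pdR i h₀ x) := by
    intro i
    rw [hA]
    rw [pdR_sub (g := fun y => h₀ y * ((f y)⁻¹ * pdR i f y)) (hph i) (hh0.mul ((hfd.inv hfx).mul (hpf i))) i,
        pdR_mul (g := fun y => (f y)⁻¹ * pdR i f y) hh0 ((hfd.inv hfx).mul (hpf i)) i,
        pdR_mul (u := fun y => (f y)⁻¹) (hfd.inv hfx) (hpf i) i,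
        pdR_inv hfd hfx i]
  rw [Dq, pd_triple (hAd 0) (hAd 1) (hAd 2), pd_triple (hAd 0) (hAd 1) (hAd 2),
      pd_triple (hAd 0) (hAd 1) (hAd 2)]
  simp only [Quaternion.re_sub, Quaternion.re_add, Quaternion.re_mul, Quaternion.re_add, Quaternion.imI_add, Quaternion.imJ_add, Quaternion.imK_add, Quaternion.re_sub, Quaternion.imI_sub, Quaternion.imJ_sub, Quaternion.imK_sub, Quaternion.re_smul, Quaternion.imI_smul, Quaternion.imJ_smul, Quaternion.imK_smul, Quaternion.re_star, Quaternion.imI_star, Quaternion.imJ_star, Quaternion.imK_star, Quaternion.re_neg, Quaternion.imI_neg, Quaternion.imJ_neg, Quaternion.imK_neg]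
  rw [hAval 0, hAval 1, hAval 2]
  simp [qi, qj, qk, gradq, hAval 0, hAval 1, hAval 2, lapl, hA]
  field_simp
  ring

end
end
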